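/- For every real p > 4, the limit as m → ∞ of (m−1)·2^p + 2m·(1 − 1/m)^p − m·(2 + 2^p)·(1 − 1/(3m))^p equals ((p − 3)·2^p − 4p)/3, and this value is strictly positive. -/

import Mathlib

open Filter Topology

lemma aux_rpow_limit (p c : ℝ) (hc : 0 < c) :
    Tendsto (fun m : ℝ => m * ((1 - c / m) ^ p - 1)) atTop (nhds (-(c * p))) := by
  have h2 : HasDerivAt (fun x : ℝ => (1 + x) ^ p) p 0 := by
    have hg : HasDerivAt (fun x : ℝ => 1 + x) 1 0 := (hasDerivAt_id _).const_add 1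
    have := hg.rpow_const (p := p) (Or.inl (by norm_num))
    simpa [Real.one_rpow] using this
  rw [hasDerivAt_iff_tendsto_slope] at h2
  have hx : Tendsto (fun m : ℝ => -c / m) atTop (nhds 0) := by
    simpa using tendsto_const_nhds.div_atTop (l := atTop) (f := fun _ : ℝ => -c) tendsto_id
  have hx' : Tendsto (fun m : ℝ => -c / m) atTop (𝓝[≠] (0 : ℝ)) := by
    refine tendsto_nhdsWithin_of_tendsto_nhds_of_eventually_within _ hx ?_
    filter_upwards [eventually_gt_atTop (0 : ℝ)] with m hm
    simp only [Set.mem_compl_iff, Set.mem_singleton_iff]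
    exact div_ne_zero (neg_ne_zero.2 hc.ne') hm.ne'
  have h3 := (h2.comp hx').const_mul (-c)
  have h4 : Tendsto (fun m : ℝ => -c * slope (fun x : ℝ => (1 + x) ^ p) 0 (-c / m))
      atTop (nhds (-c * p)) := h3
  have heq : (fun m : ℝ => -c * slope (fun x : ℝ => (1 + x) ^ p) 0 (-c / m))
      =ᶠ[atTop] fun m : ℝ => m * ((1 - c / m) ^ p - 1) := by
    filter_upwards [eventually_gt_atTop (0 : ℝ)] with m hm
    have hm0 : m ≠ 0 := hm.ne'
    have harg : (1 : ℝ) + -c / m = 1 - c / m := by ring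
    rw [slope_def_field, harg]
    simp only [add_zero, Real.one_rpow, sub_zero]
    field_simp
  simpa [neg_mul] using h4.congr' heq

theorem stmt_16 (p : ℝ) (hp : 4 < p) :
    Tendsto (fun m : ℝ =>
        (m - 1) * 2 ^ p + 2 * m * (1 - 1 / m) ^ p - m * (2 + 2 ^ p) * (1 - 1 / (3 * m)) ^ p)
      atTop (nhds (((p - 3) * 2 ^ p - 4 * p) / 3)) ∧
    0 < ((p - 3) * 2 ^ p - 4 * p) / 3 := by
  have h16 : (16 : ℝ) < 2 ^ p := by
    have : (2 : ℝ) ^ (4 : ℝ) < 2 ^ p := Real.rpow_lt_rpow_left_iff (by norm_num) |>.2 hp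
    have h4 : (2 : ℝ) ^ (4 : ℝ) = 16 := by
      rw [show (4 : ℝ) = ((4 : ℕ) : ℝ) by norm_num, Real.rpow_natCast]; norm_num
    linarith
  constructor
  · have hA := aux_rpow_limit p 1 one_pos
    have hB := aux_rpow_limit p (1 / 3) (by norm_num)
    have key : (fun m : ℝ =>
        (m - 1) * 2 ^ p + 2 * m * (1 - 1 / m) ^ p - m * (2 + 2 ^ p) * (1 - 1 / (3 * m)) ^ p)
        = fun m : ℝ => 2 * (m * ((1 - 1 / m) ^ p - 1))
            - (2 + 2 ^ p) * (m * ((1 - (1 / 3) / m) ^ p - 1)) - 2 ^ p := by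
      funext m
      rcases eq_or_ne m 0 with rfl | hm
      · norm_num
      · rw [show (1 : ℝ) / (3 * m) = (1 / 3) / m by field_simp]
        ring
    rw [key]
    have h := ((hA.const_mul 2).sub (hB.const_mul (2 + 2 ^ p))).sub_const (2 ^ p)
    convert h using 2
    ring
  · have : 4 * p < (p - 3) * 2 ^ p := by nlinarith
    linarith
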